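/- Consider the autoencoder case Y = X with N = 2, d_0 = d_1 = d_2 = 1 and X = Y = 1 (scalars). The gradient flow of L^2(W_1, W_2) = (1/2)(1 - W_2 W_1)^2 with initial conditions W_1(0) = 1, W_2(0) = -1 (balanced) is solved by W_1(t) = 1/√(2 e^{2t} - 1), W_2(t) = -1/√(2 e^{2t} - 1); in particular W(t) = W_2(t) W_1(t) → 0 as t → ∞, even though rank W(0) = 1. -/

import Mathlib

/-- W₁(t) = 1/√(2e^{2t} - 1). -/
noncomputable def W1sol (t : ℝ) : ℝ := 1 / Real.sqrt (2 * Real.exp (2 * t) - 1)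

/-- W₂(t) = -1/√(2e^{2t} - 1). -/
noncomputable def W2sol (t : ℝ) : ℝ := -(1 / Real.sqrt (2 * Real.exp (2 * t) - 1))

lemma fpos (t : ℝ) (ht : 0 ≤ t) : (1:ℝ) ≤ 2 * Real.exp (2 * t) - 1 := by
  nlinarith [Real.one_le_exp (by linarith : (0:ℝ) ≤ 2*t)]

lemma W1deriv (t : ℝ) (ht : 0 ≤ t) :
    HasDerivAt W1sol (-(2 * Real.exp (2*t)) / (Real.sqrt (2*Real.exp (2*t)-1))^3) t := by
  have hf : (1:ℝ) ≤ 2 * Real.exp (2 * t) - 1 := fpos t ht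
  have hs : 0 < Real.sqrt (2*Real.exp (2*t)-1) := Real.sqrt_pos.2 (by linarith)
  have hg : HasDerivAt (fun t : ℝ => 2 * Real.exp (2*t) - 1) (4 * Real.exp (2*t)) t := by
    have h1 : HasDerivAt (fun t : ℝ => 2*t) 2 t := by
      simpa using (hasDerivAt_id t).const_mul 2
    have h2 := ((Real.hasDerivAt_exp (2*t)).comp t h1).const_mul 2
    have h3 : HasDerivAt (fun t : ℝ => 2 * Real.exp (2*t) - 1) (2 * (Real.exp (2 * t) * 2)) t :=
      h2.sub_const 1
    convert h3 using 1
    ring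
  have hsq : HasDerivAt (fun t : ℝ => Real.sqrt (2 * Real.exp (2*t) - 1))
      (4 * Real.exp (2*t) / (2 * Real.sqrt (2*Real.exp (2*t)-1))) t := by
    simpa [mul_comm, div_eq_mul_inv, Function.comp_def] using
      (Real.hasDerivAt_sqrt (by linarith : (2*Real.exp (2*t)-1) ≠ 0)).comp t hg
  have hW : HasDerivAt W1sol
      ((0 * Real.sqrt (2*Real.exp (2*t)-1) -
        1 * (4 * Real.exp (2*t) / (2 * Real.sqrt (2*Real.exp (2*t)-1)))) /
        (Real.sqrt (2*Real.exp (2*t)-1))^2) t :=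
    (hasDerivAt_const t (1:ℝ)).div hsq (ne_of_gt hs)
  have hsq2 : (Real.sqrt (2*Real.exp (2*t)-1))^2 = 2*Real.exp (2*t)-1 :=
    Real.sq_sqrt (by linarith)
  convert hW using 1
  set s := Real.sqrt (2*Real.exp (2*t)-1) with hsdef
  field_simp
  ring

lemma key (t : ℝ) (ht : 0 ≤ t) :
    -(2 * Real.exp (2*t)) / (Real.sqrt (2*Real.exp (2*t)-1))^3
      = -(W2sol t) ^ 2 * W1sol t + W2sol t := by
  have hf : (1:ℝ) ≤ 2 * Real.exp (2 * t) - 1 := fpos t ht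
  have hs : 0 < Real.sqrt (2*Real.exp (2*t)-1) := Real.sqrt_pos.2 (by linarith)
  have hsq : (Real.sqrt (2*Real.exp (2*t)-1))^2 = 2*Real.exp (2*t)-1 :=
    Real.sq_sqrt (by linarith)
  unfold W1sol W2sol
  field_simp
  linear_combination hsq

/-- For the scalar two-layer autoencoder (d₀ = d₁ = d₂ = 1, X = Y = 1), the gradient flow
Ẇ₁ = -W₂² W₁ + W₂, Ẇ₂ = -W₂ W₁² + W₁ with balanced initial data W₁(0) = 1, W₂(0) = -1
is solved by W₁(t) = 1/√(2e^{2t}-1), W₂(t) = -1/√(2e^{2t}-1); in particular the product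
W = W₂ W₁ has rank 1 at time 0 (W(0) = -1 ≠ 0) yet tends to 0 as t → ∞. -/
theorem stmt18 :
    W1sol 0 = 1 ∧ W2sol 0 = -1 ∧
    (∀ t : ℝ, 0 ≤ t →
      HasDerivAt W1sol (-(W2sol t) ^ 2 * W1sol t + W2sol t) t) ∧
    (∀ t : ℝ, 0 ≤ t →
      HasDerivAt W2sol (-(W2sol t) * (W1sol t) ^ 2 + W1sol t) t) ∧
    W2sol 0 * W1sol 0 ≠ 0 ∧
    Filter.Tendsto (fun t => W2sol t * W1sol t) Filter.atTop (nhds 0) := by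
  have h0 : W1sol 0 = 1 := by norm_num [W1sol]
  have h0' : W2sol 0 = -1 := by norm_num [W2sol]
  refine ⟨h0, h0', ?_, ?_, ?_, ?_⟩
  · intro t ht
    exact (key t ht) ▸ W1deriv t ht
  · intro t ht
    have h : HasDerivAt W2sol
        (-(-(2 * Real.exp (2*t)) / (Real.sqrt (2*Real.exp (2*t)-1))^3)) t :=
      (W1deriv t ht).neg
    convert h using 1
    rw [key t ht]
    unfold W1sol W2sol
    ring
  · rw [h0, h0']; norm_num
  · have hf : Filter.Tendsto (fun t : ℝ => 2 * Real.exp (2*t) - 1)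
        Filter.atTop Filter.atTop := by
      have hexp : Filter.Tendsto (fun t:ℝ => 2*Real.exp (2*t)) Filter.atTop Filter.atTop :=
        (Real.tendsto_exp_atTop.comp
          (Filter.tendsto_id.const_mul_atTop two_pos)).const_mul_atTop two_pos
      simpa [sub_eq_add_neg] using Filter.tendsto_atTop_add_const_right Filter.atTop (-1) hexp
    have h := hf.inv_tendsto_atTop.neg
    simp only [neg_zero] at h
    apply h.congr'
    filter_upwards [Filter.eventually_ge_atTop (0:ℝ)] with t ht
    have hnn : (0:ℝ) ≤ 2*Real.exp (2*t)-1 := by linarith [fpos t ht]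
    have hms : Real.sqrt (2*Real.exp (2*t)-1) * Real.sqrt (2*Real.exp (2*t)-1)
        = 2*Real.exp (2*t)-1 := Real.mul_self_sqrt hnn
    have hs : 0 < Real.sqrt (2*Real.exp (2*t)-1) := Real.sqrt_pos.2 (by nlinarith [fpos t ht])
    simp only [W1sol, W2sol]
    rw [neg_mul, div_mul_div_comm, one_mul, hms, one_div]
    rfl
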